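/- Karamata's integration theorem (convergent case): if g : [t₀, ∞) → (0, ∞) is locally bounded, measurable, and regularly varying with index α < −1, then ∫_t^∞ g(s) ds < ∞ for large t and t·g(t)/∫_t^∞ g(s) ds → −α − 1 as t → ∞. -/
import Mathlib


open Filter MeasureTheory

open Set Real

/-- Uniform convergence theorem for (additively) slowly varying measurable functions. -/
lemma karamata_unif (h : ℝ → ℝ) (hm : Measurable h)
    (hp : ∀ v : ℝ, Tendsto (fun u => h (u + v) - h u) atTop (nhds 0))
    {ε : ℝ} (hε : 0 < ε) :
    ∀ᶠ u in atTop, ∀ v ∈ Icc (0:ℝ) 1, |h (u + v) - h u| ≤ ε := by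
  by_contra hcon
  rw [Filter.not_eventually] at hcon
  have hfreq : ∀ n : ℕ, ∃ u : ℝ, (n : ℝ) ≤ u ∧ ∃ v ∈ Icc (0:ℝ) 1, ε < |h (u + v) - h u| := by
    intro n
    rcases (frequently_atTop.1 hcon (n : ℝ)) with ⟨u, hu, hv⟩
    push_neg at hv
    exact ⟨u, hu, hv⟩
  choose u hu v hv hbig using hfreq
  -- pointwise: for each w, ∃ N, ∀ m ≥ N, the difference at base points is small
  have hpt : ∀ (b : ℕ → ℝ), (∀ m : ℕ, (m : ℝ) ≤ b m) → ∀ w : ℝ,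
      ∃ N : ℕ, ∀ m, N ≤ m → |h (b m + w) - h (b m)| ≤ ε / 3 := by
    intro b hb w
    have h3 := (Metric.tendsto_nhds.mp (hp w)) (ε/3) (by linarith)
    rw [eventually_atTop] at h3
    obtain ⟨M, hM⟩ := h3
    obtain ⟨N, hN⟩ := exists_nat_ge M
    refine ⟨N, fun m hm' => ?_⟩
    have h1 : M ≤ b m := le_trans (hN.trans (by exact_mod_cast hm')) (hb m)
    have := hM (b m) h1
    rw [Real.dist_eq, sub_zero] at this
    exact this.le
  set S : (ℕ → ℝ) → ℕ → Set ℝ := fun b N =>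
    Icc (0:ℝ) 2 ∩ ⋂ (m : ℕ) (_ : N ≤ m), {w : ℝ | |h (b m + w) - h (b m)| ≤ ε/3} with hS
  have hSmeas : ∀ b N, MeasurableSet (S b N) := by
    intro b N
    apply measurableSet_Icc.inter
    refine MeasurableSet.iInter fun m => MeasurableSet.iInter fun _ => ?_
    have hmeas2 : Measurable fun w => |h (b m + w) - h (b m)| :=
      ((hm.comp (measurable_const_add _)).sub measurable_const).abs
    exact measurableSet_le hmeas2 measurable_const
  have hSmono : ∀ b, Monotone (S b) := by
    intro b N N' hNN'
    refine inter_subset_inter le_rfl ?_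
    intro w hw
    simp only [mem_iInter, mem_setOf_eq] at hw ⊢
    exact fun m hm' => hw m (hNN'.trans hm')
  have hSbig : ∀ b, (∀ m : ℕ, (m:ℝ) ≤ b m) → ∃ N, (3/2 : ENNReal) < volume (S b N) := by
    intro b hb
    have hU : ⋃ N, S b N = Icc (0:ℝ) 2 := by
      apply Subset.antisymm
      · exact iUnion_subset fun N => inter_subset_left
      · intro w hw
        obtain ⟨N, hN⟩ := hpt b hb w
        refine mem_iUnion.2 ⟨N, hw, ?_⟩
        simp only [mem_iInter, mem_setOf_eq]
        exact hN
    have htend := tendsto_measure_iUnion_atTop (μ := volume) (hSmono b)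
    rw [hU, Real.volume_Icc] at htend
    have h2 : (3/2 : ENNReal) < ENNReal.ofReal (2 - 0) := by
      rw [show (2:ℝ) - 0 = 2 by norm_num, ENNReal.ofReal_ofNat]
      rw [ENNReal.div_lt_iff (by norm_num) (by norm_num)]
      norm_num
    have := htend.eventually (eventually_gt_nhds h2)
    exact this.exists
  obtain ⟨N₁, hN₁⟩ := hSbig u hu
  obtain ⟨N₂, hN₂⟩ := hSbig (fun m => u m + v m)
    (fun m => le_trans (hu m) (le_add_of_nonneg_right (hv m).1))
  set N := max N₁ N₂ with hN
  have hA : (3/2:ENNReal) < volume (S u N) :=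
    lt_of_lt_of_le hN₁ (measure_mono (hSmono u (le_max_left _ _)))
  have hB' : (3/2:ENNReal) < volume (S (fun m => u m + v m) N) :=
    lt_of_lt_of_le hN₂ (measure_mono (hSmono _ (le_max_right _ _)))
  set A := S u N with hAdef
  set B := (fun w => w + (- v N)) ⁻¹' (S (fun m => u m + v m) N) with hBdef
  have hBmeas : MeasurableSet B := (hSmeas _ _).preimage (measurable_add_const _)
  have hvolB : volume B = volume (S (fun m => u m + v m) N) :=
    measure_preimage_add_right volume _ _
  have hsum : (3:ENNReal) < volume A + volume B := by
    rw [hvolB]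
    calc (3:ENNReal) = 3/2 + 3/2 := (ENNReal.add_halves 3).symm
      _ < volume A + volume (S (fun m => u m + v m) N) := ENNReal.add_lt_add hA hB'
  have hle : volume (A ∪ B) ≤ 3 := by
    refine le_trans (measure_mono (show A ∪ B ⊆ Icc (0:ℝ) 3 from ?_)) ?_
    · rintro w (hw | hw)
      · exact ⟨hw.1.1, hw.1.2.trans (by norm_num)⟩
      · have h1 : w + -v N ∈ Icc (0:ℝ) 2 := hw.1
        have hv1 := (hv N).1
        have hv2 := (hv N).2
        exact ⟨by linarith [h1.1], by linarith [h1.2]⟩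
    · rw [Real.volume_Icc]
      rw [show (3:ℝ) - 0 = 3 by norm_num, ENNReal.ofReal_ofNat]
  have hAB : (A ∩ B).Nonempty := by
    rw [nonempty_iff_ne_empty]
    intro hemp
    have heq := measure_union_add_inter (μ := volume) A hBmeas
    rw [hemp, measure_empty, add_zero] at heq
    rw [heq] at hle
    exact absurd (lt_of_lt_of_le hsum hle) (lt_irrefl _)
  obtain ⟨w, hwA, hwB⟩ := hAB
  have h1 : |h (u N + w) - h (u N)| ≤ ε/3 := by
    have h1' := hwA.2
    simp only [mem_iInter, mem_setOf_eq] at h1'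
    exact h1' N le_rfl
  have h2 : |h (u N + w) - h (u N + v N)| ≤ ε/3 := by
    have h2' := (mem_preimage.1 hwB).2
    simp only [mem_iInter, mem_setOf_eq] at h2'
    have := h2' N le_rfl
    rwa [show u N + v N + (w + -v N) = u N + w by ring] at this
  have h3 := hbig N
  rcases abs_cases (h (u N + v N) - h (u N)) with ⟨he, _⟩ | ⟨he, _⟩ <;>
    rcases abs_le.1 h1 with ⟨ha1, ha2⟩ <;> rcases abs_le.1 h2 with ⟨hb1, hb2⟩ <;> linarith

/-- Iterated Potter-type upper bound, additive form. -/
lemma karamata_potter (h : ℝ → ℝ) {ε U : ℝ}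
    (hloc : ∀ u, U ≤ u → ∀ v ∈ Icc (0:ℝ) 1, |h (u + v) - h u| ≤ ε) :
    ∀ u, U ≤ u → ∀ v, 0 ≤ v → h (u + v) - h u ≤ ε * (v + 1) := by
  have hε0 : 0 ≤ ε := by
    have := hloc U le_rfl 0 ⟨le_rfl, zero_le_one⟩
    simpa using this
  have claim : ∀ n : ℕ, ∀ u, U ≤ u → ∀ v, (n:ℝ) ≤ v → v ≤ (n:ℝ) + 1 →
      h (u + v) - h u ≤ ε * ((n:ℝ) + 1) := by
    intro n
    induction n with
    | zero =>
      intro u hu v hv1 hv2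
      have := hloc u hu v ⟨by exact_mod_cast hv1, by push_cast at hv2; linarith⟩
      have := (abs_le.1 this).2
      simpa using this
    | succ n ih =>
      intro u hu v hv1 hv2
      have e1 : h (u + 1) - h u ≤ ε :=
        (abs_le.1 (hloc u hu 1 ⟨zero_le_one, le_rfl⟩)).2
      have e2 := ih (u + 1) (by linarith) (v - 1) (by push_cast at hv1 ⊢; linarith)
        (by push_cast at hv2 ⊢; linarith)
      rw [show u + 1 + (v - 1) = u + v by ring] at e2
      have e3 : ε * ((n:ℝ) + 1 + 1) = ε * ((n:ℝ) + 1) + ε := by ring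
      push_cast
      linarith
  intro u hu v hv
  set n := ⌊v⌋₊ with hn
  have h1 : (n:ℝ) ≤ v := Nat.floor_le hv
  have h2 : v ≤ (n:ℝ) + 1 := (Nat.lt_floor_add_one v).le
  have := claim n u hu v h1 h2
  have h3 : ε * ((n:ℝ) + 1) ≤ ε * (v + 1) :=
    mul_le_mul_of_nonneg_left (by linarith) hε0
  linarith

/-- Karamata's integration theorem, convergent case: if `g` is positive, measurable and
locally bounded on `[t₀, ∞)` and regularly varying with index `α < −1`, then `g` is
integrable on `(t, ∞)` for large `t` and `t·g(t)/∫_t^∞ g(s) ds → −α − 1` as `t → ∞`. -/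
theorem stmt_18 (g : ℝ → ℝ) (t₀ : ℝ) (ht₀ : 0 < t₀) (α : ℝ) (hα : α < -1)
    (hmeas : Measurable g) (hpos : ∀ s, t₀ ≤ s → 0 < g s)
    (hbdd : ∀ b, t₀ ≤ b → ∃ C, ∀ s ∈ Set.Icc t₀ b, g s ≤ C)
    (hrv : ∀ x : ℝ, 0 < x →
      Tendsto (fun t => g (t * x) / g t) atTop (nhds (x ^ α))) :
    (∀ᶠ t in atTop, IntegrableOn g (Set.Ioi t)) ∧
    Tendsto (fun t => t * g t / ∫ s in Set.Ioi t, g s) atTop (nhds (-α - 1)) := by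
  set ε : ℝ := (-1 - α) / 2 with hεdef
  have hε : 0 < ε := by rw [hεdef]; linarith
  set β : ℝ := α + ε with hβdef
  have hβ : β < -1 := by rw [hβdef, hεdef]; linarith
  set f : ℝ → ℝ := fun u => Real.log (g (Real.exp u)) with hfdef
  set h : ℝ → ℝ := fun u => f u - α * u with hhdef
  have hm : Measurable h :=
    ((hmeas.comp Real.measurable_exp).log).sub (measurable_const.mul measurable_id)
  -- pointwise slow variation of h
  have hp : ∀ v : ℝ, Tendsto (fun u => h (u + v) - h u) atTop (nhds 0) := by
    intro v
    have s1 := hrv (Real.exp v) (Real.exp_pos v)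
    have s2 : Real.exp v ^ α = Real.exp (v * α) := by
      rw [Real.rpow_def_of_pos (Real.exp_pos v), Real.log_exp]
    have s3 : Tendsto (fun t => Real.log (g (t * Real.exp v) / g t)) atTop
        (nhds (v * α)) := by
      have := s1.log (by rw [s2]; exact (Real.exp_pos _).ne')
      rwa [s2, Real.log_exp] at this
    have s4 : Tendsto (fun t => Real.log (g (t * Real.exp v)) - Real.log (g t)) atTop
        (nhds (v * α)) := by
      refine s3.congr' ?_
      filter_upwards [eventually_ge_atTop t₀, eventually_ge_atTop (t₀ / Real.exp v)]
        with t h1 h2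
      have hg1 : g t ≠ 0 := (hpos t h1).ne'
      have hg2 : g (t * Real.exp v) ≠ 0 := by
        refine (hpos _ ?_).ne'
        rw [div_le_iff₀ (Real.exp_pos v)] at h2
        exact h2
      rw [Real.log_div hg2 hg1]
    have s5 : Tendsto (fun u => Real.log (g (Real.exp u * Real.exp v)) -
        Real.log (g (Real.exp u))) atTop (nhds (v * α)) :=
      s4.comp Real.tendsto_exp_atTop
    have s6 : Tendsto (fun u => f (u + v) - f u) atTop (nhds (v * α)) := by
      refine s5.congr fun u => ?_
      rw [hfdef]
      simp only [← Real.exp_add]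
    have s7 : Tendsto (fun u => (f (u + v) - f u) - α * v) atTop
        (nhds (v * α - α * v)) := s6.sub_const _
    rw [show v * α - α * v = 0 by ring] at s7
    refine s7.congr fun u => ?_
    simp only [hhdef]
    ring
  -- uniform convergence + Potter bound
  obtain ⟨U₀, hU₀⟩ := eventually_atTop.1 (karamata_unif h hm hp hε)
  have hpot := karamata_potter h hU₀
  set T : ℝ := max (Real.exp U₀) t₀ with hTdef
  have hT0 : 0 < T := lt_of_lt_of_le (Real.exp_pos U₀) (le_max_left _ _)
  have hTt₀ : t₀ ≤ T := le_max_right _ _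
  -- multiplicative Potter bound
  have hgb : ∀ t, T ≤ t → ∀ x, 1 ≤ x → g (t * x) ≤ g t * (Real.exp ε * x ^ β) := by
    intro t ht x hx
    have ht0 : 0 < t := lt_of_lt_of_le hT0 ht
    have hx0 : 0 < x := lt_of_lt_of_le one_pos hx
    have htx : t₀ ≤ t * x := le_trans (hTt₀.trans ht) (le_mul_of_one_le_right ht0.le hx)
    have hu : U₀ ≤ Real.log t :=
      (Real.le_log_iff_exp_le ht0).2 ((le_max_left _ _).trans ht)
    have hv : 0 ≤ Real.log x := Real.log_nonneg hx
    have hP := hpot (Real.log t) hu (Real.log x) hv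
    have hexp : Real.exp (Real.log t + Real.log x) = t * x := by
      rw [Real.exp_add, Real.exp_log ht0, Real.exp_log hx0]
    have hP' : Real.log (g (t * x)) ≤ Real.log (g t) + (β * Real.log x + ε) := by
      simp only [hhdef, hfdef, hexp, Real.exp_log ht0] at hP
      rw [hβdef]
      nlinarith [hP]
    have hgtx : 0 < g (t * x) := hpos _ htx
    have := Real.exp_le_exp.2 hP'
    rw [Real.exp_log hgtx, Real.exp_add, Real.exp_add, Real.exp_log (hpos t (hTt₀.trans ht))]
      at this
    calc g (t * x) ≤ g t * (Real.exp (β * Real.log x) * Real.exp ε) := this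
      _ = g t * (Real.exp ε * x ^ β) := by
          rw [Real.rpow_def_of_pos hx0, mul_comm (Real.log x) β]; ring
  -- integrability
  have hInt : ∀ t, T ≤ t → IntegrableOn g (Set.Ioi t) := by
    intro t ht
    have ht0 : 0 < t := lt_of_lt_of_le hT0 ht
    have hbint : IntegrableOn (fun s => (g t * Real.exp ε / t ^ β) * s ^ β)
        (Set.Ioi t) := (integrableOn_Ioi_rpow_of_lt hβ ht0).const_mul _
    refine Integrable.mono' hbint hmeas.aestronglyMeasurable ?_
    filter_upwards [ae_restrict_mem measurableSet_Ioi] with s hs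
    have hts : t < s := hs
    have hs0 : 0 < s := ht0.trans hts
    have hgs : 0 < g s := hpos s ((hTt₀.trans ht).trans hts.le)
    rw [Real.norm_eq_abs, abs_of_pos hgs]
    have h1 : 1 ≤ s / t := (one_le_div₀ ht0).2 hts.le
    have := hgb t ht (s / t) h1
    rw [mul_div_cancel₀ s ht0.ne'] at this
    calc g s ≤ g t * (Real.exp ε * (s / t) ^ β) := this
      _ = g t * Real.exp ε / t ^ β * s ^ β := by
          rw [Real.div_rpow hs0.le ht0.le]; ring
  refine ⟨eventually_atTop.2 ⟨T, hInt⟩, ?_⟩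
  -- limit computation
  set R : ℝ → ℝ := fun t => ∫ s in Set.Ioi t, g s with hRdef
  set F : ℝ → ℝ := fun t => ∫ x in Set.Ioi (1:ℝ), g (t * x) / g t with hFdef
  have hcomp : ∀ t : ℝ, 0 < t → (∫ x in Set.Ioi (1:ℝ), g (t * x)) = t⁻¹ * R t := by
    intro t ht
    have := MeasureTheory.integral_comp_mul_left_Ioi g 1 ht
    rw [mul_one] at this
    simpa [smul_eq_mul] using this
  have hFeq : ∀ t : ℝ, F t = (g t)⁻¹ * ∫ x in Set.Ioi (1:ℝ), g (t * x) := by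
    intro t
    rw [hFdef]
    simp only [div_eq_mul_inv]
    rw [MeasureTheory.integral_mul_const, mul_comm]
  have htendF : Tendsto F atTop (nhds (∫ x in Set.Ioi (1:ℝ), x ^ α)) := by
    refine MeasureTheory.tendsto_integral_filter_of_dominated_convergence
      (fun x => Real.exp ε * x ^ β) ?_ ?_ ?_ ?_
    · exact Eventually.of_forall fun t =>
        ((hmeas.comp (measurable_const_mul t)).div_const (g t)).aestronglyMeasurable
    · refine eventually_atTop.2 ⟨T, fun t ht => ?_⟩
      filter_upwards [ae_restrict_mem measurableSet_Ioi] with x hx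
      have hx1 : (1:ℝ) < x := hx
      have ht0 : 0 < T := hT0
      have htpos : 0 < t := lt_of_lt_of_le hT0 ht
      have hgt : 0 < g t := hpos t (hTt₀.trans ht)
      have hgtx : 0 < g (t * x) :=
        hpos _ (le_trans (hTt₀.trans ht) (le_mul_of_one_le_right htpos.le hx1.le))
      rw [Real.norm_eq_abs, abs_of_pos (div_pos hgtx hgt), div_le_iff₀ hgt]
      calc g (t * x) ≤ g t * (Real.exp ε * x ^ β) := hgb t ht x hx1.le
        _ = Real.exp ε * x ^ β * g t := by ring
    · exact (integrableOn_Ioi_rpow_of_lt hβ one_pos).const_mul _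
    · filter_upwards [ae_restrict_mem measurableSet_Ioi] with x hx
      exact hrv x (lt_trans one_pos hx)
  have hval : (∫ x in Set.Ioi (1:ℝ), x ^ α) = -1 / (α + 1) := by
    rw [integral_Ioi_rpow_of_lt hα one_pos, Real.one_rpow]
  have hLne : (-1 / (α + 1)) ≠ 0 := by
    have : α + 1 < 0 := by linarith
    intro hc
    rw [div_eq_zero_iff] at hc
    rcases hc with hc | hc
    · norm_num at hc
    · linarith
  rw [hval] at htendF
  have htendInv : Tendsto (fun t => (F t)⁻¹) atTop (nhds ((-1 / (α + 1))⁻¹)) :=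
    htendF.inv₀ hLne
  have hLinv : (-1 / (α + 1))⁻¹ = -α - 1 := by
    rw [inv_div]; ring
  rw [hLinv] at htendInv
  refine htendInv.congr' ?_
  filter_upwards [eventually_ge_atTop T] with t ht
  have htpos : 0 < t := lt_of_lt_of_le hT0 ht
  have hgt : 0 < g t := hpos t (hTt₀.trans ht)
  have : F t = (g t)⁻¹ * (t⁻¹ * R t) := by rw [hFeq, hcomp t htpos]
  rw [this]
  rw [mul_inv, mul_inv, inv_inv, inv_inv, div_eq_mul_inv]
  ring
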